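/- Mass bound in case IV of Theorem 3.2: let μ be a probability measure on (0,∞) with positive density, mean S_0 ∈ (b̲,b̄), and suppose b̄ < ρ₋(0). Then μ((ρ₋(0),∞)) ≤ (S_0−b̲)/(b̄−b̲). -/

import Mathlib

open MeasureTheory Set

noncomputable def bary (μ : Measure ℝ) (Γ : Set ℝ) : ℝ :=
  (∫ u in Γ, u ∂μ) / (μ Γ).toReal

/-- Mass bound in case IV of Theorem 3.2:
if `b̄ < ρ₋(0)` then `μ((ρ₋(0),∞)) ≤ (S₀ − b̲)/(b̄ − b̲)`. -/
theorem stmt12 (μ : Measure ℝ) [IsProbabilityMeasure μ]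
    (hsupp : μ (Set.Iic 0) = 0)
    (hdens : ∀ a b : ℝ, 0 ≤ a → a < b → 0 < μ (Set.Ioo a b))
    (hint : Integrable id μ)
    (S₀ lb ub r₀ : ℝ) (hmean : ∫ u, u ∂μ = S₀)
    (h0 : 0 < lb) (h1 : lb < S₀) (h2 : S₀ < ub)
    (hr₀ : bary μ (Set.Icc 0 r₀) = lb)
    (hub : ub < r₀) :
    (μ (Set.Ioi r₀)).toReal ≤ (S₀ - lb) / (ub - lb) := by
  have hr0pos : (0:ℝ) < r₀ := lt_trans (lt_trans h0 (lt_trans h1 h2)) hub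
  have hubpos : (0:ℝ) < ub := lt_trans (lt_trans h0 h1) h2
  -- Iic r₀ agrees with Icc 0 r₀ up to μ-null set
  have hae : (Set.Iic r₀ : Set ℝ) =ᵐ[μ] Set.Icc 0 r₀ := by
    have h1' : μ (Set.Iic r₀ \ Set.Icc 0 r₀) = 0 := by
      apply measure_mono_null _ hsupp
      intro x hx
      simp only [mem_diff, mem_Iic, mem_Icc, not_and, not_le] at hx ⊢
      by_contra hpos
      push_neg at hpos
      exact absurd (hx.2 (le_of_lt hpos)) (not_lt.mpr hx.1)
    have h2' : μ (Set.Icc 0 r₀ \ Set.Iic r₀) = 0 := by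
      have : Set.Icc 0 r₀ \ Set.Iic r₀ = ∅ := by
        ext x; simp only [mem_diff, mem_Icc, mem_Iic, mem_empty_iff_false, iff_false]
        rintro ⟨⟨_, h⟩, hn⟩; exact hn h
      simp [this]
    exact MeasureTheory.ae_eq_set.mpr ⟨h1', h2'⟩
  have hμeq : μ (Set.Iic r₀) = μ (Set.Icc 0 r₀) := measure_congr hae
  have hinteq : ∫ u in Set.Iic r₀, u ∂μ = ∫ u in Set.Icc 0 r₀, u ∂μ :=
    setIntegral_congr_set hae
  -- positivity of μ (Icc 0 r₀)
  have hIccpos : 0 < μ (Set.Icc 0 r₀) :=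
    lt_of_lt_of_le (hdens 0 r₀ le_rfl hr0pos) (measure_mono Set.Ioo_subset_Icc_self)
  have hIccfin : μ (Set.Icc 0 r₀) ≠ ⊤ := measure_ne_top μ _
  set p : ℝ := (μ (Set.Icc 0 r₀)).toReal with hp
  set m : ℝ := (μ (Set.Ioi r₀)).toReal with hm
  have hppos : 0 < p := ENNReal.toReal_pos (ne_of_gt hIccpos) hIccfin
  -- barycenter: ∫ over Icc = lb * p
  have hbar : ∫ u in Set.Icc 0 r₀, u ∂μ = lb * p := by
    have := hr₀
    rw [bary] at this
    rw [← hp, div_eq_iff (ne_of_gt hppos)] at this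
    linarith [this]
  -- p + m = 1
  have hpm : p + m = 1 := by
    have hcompl : (Set.Iic r₀)ᶜ = Set.Ioi r₀ := Set.compl_Iic
    have h := measure_add_measure_compl (μ := μ) (measurableSet_Iic (a := r₀))
    rw [hcompl, hμeq] at h
    have h2 : (μ (Set.Icc 0 r₀)).toReal + (μ (Set.Ioi r₀)).toReal = (μ (Set.univ : Set ℝ)).toReal := by
      rw [← ENNReal.toReal_add hIccfin (measure_ne_top μ _), h]
    rwa [measure_univ, ENNReal.toReal_one] at h2
  -- split the mean
  have hsplit : S₀ = lb * p + ∫ u in Set.Ioi r₀, u ∂μ := by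
    have h := MeasureTheory.integral_add_compl (measurableSet_Iic (a := r₀)) hint
    rw [Set.compl_Iic] at h
    simp only [id] at h
    rw [← hmean, ← h, hinteq, hbar]
  -- lower bound on the tail integral
  have htail : ub * m ≤ ∫ u in Set.Ioi r₀, u ∂μ := by
    have : ∀ x ∈ Set.Ioi r₀, ub ≤ x := fun x hx => le_of_lt (lt_trans hub hx)
    calc ub * m = ∫ _ in Set.Ioi r₀, ub ∂μ := by
          rw [setIntegral_const, smul_eq_mul, mul_comm]; rfl
      _ ≤ ∫ u in Set.Ioi r₀, u ∂μ := by
          apply setIntegral_mono_on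
          · exact integrable_const ub
          · exact hint.integrableOn
          · exact measurableSet_Ioi
          · exact this
  -- conclude
  have hS : lb + (ub - lb) * m ≤ S₀ := by
    have : lb * p = lb * (1 - m) := by rw [show (1:ℝ) - m = p by linarith]
    nlinarith [hsplit, htail]
  rw [le_div_iff₀ (by linarith : (0:ℝ) < ub - lb)]
  nlinarith [hS]
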